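/- arXiv:2211.12598 — 2 statements merged into one kernel-verified Lean document; each statement's English description precedes it below -/
import Mathlib

section
/- Let T > 0, let Ω ⊆ (−T,T) be a measurable subset of ℝ with B = sup_{x∈Ω}|x| < T, let N be a positive integer, τ > 0, and let φ(r) = exp(−r²). Let f ∈ L²(Ω), let g ∈ L²(ℝ) be any function with g = f almost everywhere on Ω, and let λ = (λ_n)_{n∈ℤ} ∈ ℓ²(ℤ), with h = Σ_{n∈ℤ} λ_n √ε φ(ε(· − nT/N)) ∈ L²(ℝ). If ε ≥ (1/(√2 (T − B))) · sqrt( log( √(2π) B N / (T τ²) ) ), then E_{N,τ}(f) ≤ ‖g − h‖_{L²(ℝ)} + 2τ ‖λ‖_{ℓ²}. -/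
open MeasureTheory Real Filter

section Helpers

lemma summable_exp_neg_sq_int (b δ x : ℝ) (hb : 0 < b) (hδ : 0 < δ) :
    Summable fun m : ℤ => Real.exp (-b * (x - m * δ) ^ 2) := by
  set r : ℝ := Real.exp (-(b * δ ^ 2 / 2)) with hrdef
  have hr0 : 0 < r := Real.exp_pos _
  have hr1 : r < 1 := by
    apply Real.exp_lt_one_iff.2
    have : 0 < b * δ ^ 2 / 2 := by positivity
    linarith
  have hmaj : Summable fun m : ℤ => Real.exp (b * x ^ 2) * r ^ m.natAbs := by
    apply Summable.mul_left
    apply Summable.of_nat_of_neg_add_one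
    · simpa using summable_geometric_of_lt_one hr0.le hr1
    · have he : (fun n : ℕ => r ^ ((-((n : ℤ) + 1)).natAbs)) = fun n : ℕ => r * r ^ n := by
        funext n
        have hn : ((-((n : ℤ) + 1)).natAbs) = n + 1 := by omega
        rw [hn, pow_succ']
      exact he ▸ (summable_geometric_of_lt_one hr0.le hr1).mul_left r
  apply Summable.of_nonneg_of_le (fun m => (Real.exp_pos _).le) (fun m => ?_) hmaj
  have h1 : (m.natAbs : ℝ) ≤ ((m : ℝ)) ^ 2 := by
    have h2 : ((m.natAbs : ℝ)) ^ 2 = ((m : ℝ)) ^ 2 := by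
      push_cast [Int.natAbs_sq]
      simp [Nat.cast_natAbs]
    rcases Nat.eq_zero_or_pos m.natAbs with h | h
    · simp [h] at h2 ⊢; nlinarith [sq_nonneg (m:ℝ)]
    · have h3 : (1:ℝ) ≤ (m.natAbs : ℝ) := by exact_mod_cast h
      nlinarith
  calc Real.exp (-b * (x - m * δ) ^ 2)
      ≤ Real.exp (b * x ^ 2 + (m.natAbs : ℝ) * (-(b * δ ^ 2 / 2))) := by
        apply Real.exp_le_exp.2
        nlinarith [sq_nonneg (x + (x - m * δ)), sq_nonneg (x - m * δ), mul_pos hb (mul_pos hδ hδ)]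
    _ = Real.exp (b * x ^ 2) * r ^ m.natAbs := by
        rw [Real.exp_add, hrdef, ← Real.exp_nat_mul]

lemma tsum_mul_le_sqrt_mul_sqrt {ι : Type*} (f g : ι → ℝ) (hf0 : ∀ i, 0 ≤ f i)
    (hg0 : ∀ i, 0 ≤ g i) (hf : Summable fun i => f i ^ 2) (hg : Summable fun i => g i ^ 2) :
    ∑' i, f i * g i ≤ Real.sqrt (∑' i, f i ^ 2) * Real.sqrt (∑' i, g i ^ 2) := by
  have hfg : Summable fun i => f i * g i := by
    apply Summable.of_nonneg_of_le (fun i => mul_nonneg (hf0 i) (hg0 i)) (fun i => ?_) (hf.add hg)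
    nlinarith [sq_nonneg (f i - g i), sq_nonneg (f i), sq_nonneg (g i)]
  apply Summable.tsum_le_of_sum_le hfg
  intro s
  have h1 : (∑ i ∈ s, f i * g i) ^ 2 ≤ (∑' i, f i ^ 2) * (∑' i, g i ^ 2) := by
    calc (∑ i ∈ s, f i * g i) ^ 2 ≤ (∑ i ∈ s, f i ^ 2) * (∑ i ∈ s, g i ^ 2) :=
          Finset.sum_mul_sq_le_sq_mul_sq s f g
      _ ≤ (∑' i, f i ^ 2) * (∑' i, g i ^ 2) := by
          apply mul_le_mul (Summable.sum_le_tsum s (fun i _ => sq_nonneg _) hf)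
            (Summable.sum_le_tsum s (fun i _ => sq_nonneg _) hg)
            (Finset.sum_nonneg fun i _ => sq_nonneg _) (tsum_nonneg fun i => sq_nonneg _)
  calc (∑ i ∈ s, f i * g i) ≤ Real.sqrt ((∑' i, f i ^ 2) * (∑' i, g i ^ 2)) := by
        apply Real.le_sqrt (Finset.sum_nonneg fun i _ => mul_nonneg (hf0 i) (hg0 i))
          (mul_nonneg (tsum_nonneg fun i => sq_nonneg _) (tsum_nonneg fun i => sq_nonneg _)) |>.2 h1
    _ = _ := Real.sqrt_mul (tsum_nonneg fun i => sq_nonneg _) _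

lemma tsum_subtype_le_of_nonneg {w : ℤ → ℝ} (A : Set ℤ) (hw0 : ∀ m, 0 ≤ w m)
    (hw : Summable w) : ∑' i : A, w i ≤ ∑' m, w m := by
  rw [tsum_subtype]
  exact Summable.tsum_le_tsum (fun m => Set.indicator_le_self' (fun m _ => hw0 m) m)
    (hw.indicator A) hw

lemma sum_gauss_le_integral (b c δ : ℝ) (hb : 0 < b) (hc : 0 < c) (hδ : 0 < δ) (K : ℕ) :
    ∑ k ∈ Finset.range K, Real.exp (-b * (c + ((k : ℝ) + 1) * δ) ^ 2) ≤
      (1 / δ) * ∫ u in Set.Ioi c, Real.exp (-b * u ^ 2) := by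
  have hint : Integrable (fun u : ℝ => Real.exp (-b * u ^ 2)) := integrable_exp_neg_mul_sq hb
  set a : ℕ → ℝ := fun k => c + k * δ with ha
  have hmono : ∀ k : ℕ, a k ≤ a (k + 1) := by
    intro k; simp only [ha]; push_cast; nlinarith
  have hterm : ∀ k : ℕ, δ * Real.exp (-b * (c + ((k : ℝ) + 1) * δ) ^ 2) ≤
      ∫ u in (a k)..(a (k + 1)), Real.exp (-b * u ^ 2) := by
    intro k
    have heq : δ * Real.exp (-b * (c + ((k : ℝ) + 1) * δ) ^ 2) =
        ∫ _ in (a k)..(a (k + 1)), Real.exp (-b * (c + ((k : ℝ) + 1) * δ) ^ 2) := by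
      rw [intervalIntegral.integral_const, smul_eq_mul, ha]
      push_cast; ring_nf
    rw [heq]
    apply intervalIntegral.integral_mono_on (hmono k) (intervalIntegrable_const)
      hint.intervalIntegrable
    intro u hu
    apply Real.exp_le_exp.2
    have h1 : a k ≤ u := hu.1
    have h2 : u ≤ a (k + 1) := hu.2
    have h3 : 0 < a k := by simp only [ha]; positivity
    have h4 : a (k + 1) = c + ((k : ℝ) + 1) * δ := by simp only [ha]; push_cast; ring
    have h5 : 0 ≤ u := (lt_of_lt_of_le h3 h1).le
    have h6 : u ^ 2 ≤ (c + ((k : ℝ) + 1) * δ) ^ 2 := by nlinarith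
    nlinarith [mul_le_mul_of_nonneg_left h6 hb.le]
  have hsum : ∑ k ∈ Finset.range K, ∫ u in (a k)..(a (k + 1)), Real.exp (-b * u ^ 2) =
      ∫ u in (a 0)..(a K), Real.exp (-b * u ^ 2) :=
    intervalIntegral.sum_integral_adjacent_intervals fun k _ => hint.intervalIntegrable
  have ha0 : a 0 = c := by simp [ha]
  have haK : c ≤ a K := by
    simp only [ha]; nlinarith [mul_nonneg (Nat.cast_nonneg (α := ℝ) K) hδ.le]
  have hle : ∫ u in (a 0)..(a K), Real.exp (-b * u ^ 2) ≤
      ∫ u in Set.Ioi c, Real.exp (-b * u ^ 2) := by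
    rw [intervalIntegral.integral_of_le (ha0 ▸ haK), ha0]
    apply setIntegral_mono_set hint.integrableOn
      (Filter.Eventually.of_forall fun u => (Real.exp_pos _).le)
    exact Filter.Eventually.of_forall (Set.Ioc_subset_Ioi_self)
  have h5 : δ * ∑ k ∈ Finset.range K, Real.exp (-b * (c + ((k : ℝ) + 1) * δ) ^ 2) ≤
      ∫ u in Set.Ioi c, Real.exp (-b * u ^ 2) := by
    rw [Finset.mul_sum]
    calc ∑ k ∈ Finset.range K, δ * Real.exp (-b * (c + ((k : ℝ) + 1) * δ) ^ 2)
        ≤ ∑ k ∈ Finset.range K, ∫ u in (a k)..(a (k + 1)), Real.exp (-b * u ^ 2) :=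
          Finset.sum_le_sum fun k _ => hterm k
      _ = _ := hsum
      _ ≤ _ := hle
  rw [one_div, inv_mul_eq_div, le_div_iff₀ hδ]
  linarith

lemma integral_gauss_Ioi_le (b c : ℝ) (hb : 0 < b) (hc : 0 ≤ c) :
    ∫ u in Set.Ioi c, Real.exp (-b * u ^ 2) ≤
      Real.exp (-b * c ^ 2) * (Real.sqrt (π / b) / 2) := by
  have hint : Integrable (fun u : ℝ => Real.exp (-b * u ^ 2)) := integrable_exp_neg_mul_sq hb
  have hshift : Integrable (fun u : ℝ => Real.exp (-b * (u - c) ^ 2)) := by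
    simpa using hint.comp_sub_right c
  have h1 : ∫ u in Set.Ioi c, Real.exp (-b * u ^ 2) ≤
      ∫ u in Set.Ioi c, Real.exp (-b * c ^ 2) * Real.exp (-b * (u - c) ^ 2) := by
    apply setIntegral_mono_on hint.integrableOn ((hshift.const_mul _).integrableOn)
      measurableSet_Ioi
    intro u hu
    rw [← Real.exp_add]
    apply Real.exp_le_exp.2
    have := Set.mem_Ioi.1 hu
    nlinarith [mul_nonneg (mul_nonneg hb.le hc) (sub_nonneg.2 this.le)]
  have h3 : ∫ u in Set.Ioi c, Real.exp (-b * (u - c) ^ 2) =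
      ∫ v in Set.Ioi (0 : ℝ), Real.exp (-b * v ^ 2) := by
    have himg : (fun x => x + c) '' Set.Ioi (0 : ℝ) = Set.Ioi c := by
      rw [Set.image_add_const_Ioi, zero_add]
    have := (measurePreserving_add_right (volume : Measure ℝ) c).setIntegral_image_emb
      (MeasurableEquiv.addRight c).measurableEmbedding
      (fun u => Real.exp (-b * (u - c) ^ 2)) (Set.Ioi 0)
    rw [himg] at this
    rw [this]
    congr 1
    funext v
    ring_nf
  have h2 : ∫ u in Set.Ioi c, Real.exp (-b * c ^ 2) * Real.exp (-b * (u - c) ^ 2) =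
      Real.exp (-b * c ^ 2) * ∫ u in Set.Ioi c, Real.exp (-b * (u - c) ^ 2) :=
    MeasureTheory.integral_const_mul _ _
  rw [h2, h3, integral_gaussian_Ioi] at h1
  exact h1

lemma summable_abs_gauss (δ b B : ℝ) (hb : 0 < b) (hδ : 0 < δ) :
    Summable fun m : ℤ => Real.exp (-b * (|(m : ℝ)| * δ - B) ^ 2) := by
  have hfZ : Summable fun m : ℤ => Real.exp (-b * (B - m * δ) ^ 2) :=
    summable_exp_neg_sq_int b δ B hb hδ
  apply Summable.of_nat_of_neg_add_one
  · apply Summable.congr (hfZ.comp_injective Nat.cast_injective)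
    intro n
    simp only [Function.comp]
    rw [show |((n : ℤ) : ℝ)| = ((n : ℤ) : ℝ) from abs_of_nonneg (by positivity)]
    congr 1
    ring
  · have h0 : Summable fun n : ℕ => Real.exp (-b * (B - (n:ℤ) * δ) ^ 2) :=
      hfZ.comp_injective Nat.cast_injective
    have h1 := (summable_nat_add_iff
      (f := fun n : ℕ => Real.exp (-b * (B - (n:ℤ) * δ) ^ 2)) 1).2 h0
    apply h1.congr
    intro n
    rw [show |((-((n : ℤ) + 1) : ℤ) : ℝ)| = (((n : ℤ) : ℝ) + 1) by
      push_cast; rw [abs_neg, abs_of_nonneg (by positivity)]]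
    push_cast
    ring_nf

lemma tsum_compl_gauss (N : ℕ) (δ b B : ℝ) (hb : 0 < b) (hδ : 0 < δ) :
    ∑' m : ↑((↑(Finset.Icc (-(N:ℤ)) (N:ℤ)) : Set ℤ))ᶜ,
        Real.exp (-b * (|((m : ℤ) : ℝ)| * δ - B) ^ 2)
      = 2 * ∑' k : ℕ, Real.exp (-b * (((N:ℝ) + 1 + (k:ℝ)) * δ - B) ^ 2) := by
  set S : Set ℤ := (↑(Finset.Icc (-(N:ℤ)) (N:ℤ)) : Set ℤ) with hS
  set Q : ℤ → ℝ := fun m => Real.exp (-b * (|(m : ℝ)| * δ - B) ^ 2) with hQ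
  have hQZ : Summable Q := summable_abs_gauss δ b B hb hδ
  have hind : Summable (Sᶜ.indicator Q) := hQZ.indicator _
  have hindn : Summable fun n : ℕ => Sᶜ.indicator Q (n : ℤ) :=
    hind.comp_injective Nat.cast_injective
  have hindm : Summable fun n : ℕ => Sᶜ.indicator Q (-((n : ℤ) + 1)) :=
    hind.comp_injective (fun a b hab => by omega)
  have hmem : ∀ m : ℤ, m ∈ S ↔ (-(N:ℤ) ≤ m ∧ m ≤ N) := by
    intro m; simp [hS, Finset.mem_Icc]
  have hp1 : ∑' n : ℕ, Sᶜ.indicator Q (n : ℤ) =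
      ∑' k : ℕ, Real.exp (-b * (((N:ℝ) + 1 + (k:ℝ)) * δ - B) ^ 2) := by
    rw [← Summable.sum_add_tsum_nat_add (k := N + 1) hindn]
    have hz : ∑ i ∈ Finset.range (N + 1), Sᶜ.indicator Q (i : ℤ) = 0 := by
      apply Finset.sum_eq_zero
      intro i hi
      have hiN := Finset.mem_range.1 hi
      apply Set.indicator_of_notMem
      simp only [Set.mem_compl_iff, not_not, hmem]
      omega
    rw [hz, zero_add]
    apply tsum_congr
    intro k
    rw [Set.indicator_of_mem (by simp only [Set.mem_compl_iff, hmem]; omega)]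
    simp only [hQ]
    rw [show |(((k + (N + 1) : ℕ) : ℤ) : ℝ)| = ((N:ℝ) + 1 + k) by
      push_cast; rw [abs_of_nonneg (by positivity)]; ring]
  have hp2 : ∑' n : ℕ, Sᶜ.indicator Q (-((n : ℤ) + 1)) =
      ∑' k : ℕ, Real.exp (-b * (((N:ℝ) + 1 + (k:ℝ)) * δ - B) ^ 2) := by
    rw [← Summable.sum_add_tsum_nat_add (k := N) hindm]
    have hz : ∑ i ∈ Finset.range N, Sᶜ.indicator Q (-((i : ℤ) + 1)) = 0 := by
      apply Finset.sum_eq_zero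
      intro i hi
      have hiN := Finset.mem_range.1 hi
      apply Set.indicator_of_notMem
      simp only [Set.mem_compl_iff, not_not, hmem]
      omega
    rw [hz, zero_add]
    apply tsum_congr
    intro k
    rw [Set.indicator_of_mem (by simp only [Set.mem_compl_iff, hmem]; omega)]
    simp only [hQ]
    rw [show |((-(((k + N : ℕ) : ℤ) + 1) : ℤ) : ℝ)| = ((N:ℝ) + 1 + k) by
      push_cast; rw [abs_neg, abs_of_nonneg (by positivity)]; ring]
  have key : ∑' m : ↑Sᶜ, Q ↑m = ∑' n : ℕ, Sᶜ.indicator Q (n : ℤ) +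
      ∑' n : ℕ, Sᶜ.indicator Q (-((n : ℤ) + 1)) := by
    rw [tsum_subtype Sᶜ Q, tsum_of_nat_of_neg_add_one hindn hindm]
  rw [show (∑' m : ↑Sᶜ, Real.exp (-b * (|((m : ℤ) : ℝ)| * δ - B) ^ 2)) = ∑' m : ↑Sᶜ, Q ↑m
    from rfl, key, hp1, hp2]
  ring

lemma lam_sq_summable (lam : lp (fun _ : ℤ => ℂ) 2) :
    Summable fun m : ℤ => ‖lam m‖ ^ 2 := by
  have hconv : ∀ y : ℝ, y ^ (2:ℝ) = y ^ 2 := fun y => by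
    rw [show (2:ℝ) = ((2:ℕ):ℝ) by norm_num, Real.rpow_natCast]
  have := (lp.memℓp lam).summable (p := 2) (by norm_num)
  simpa [hconv] using this

lemma lam_norm_sq (lam : lp (fun _ : ℤ => ℂ) 2) :
    ‖lam‖ ^ 2 = ∑' m : ℤ, ‖lam m‖ ^ 2 := by
  have hconv : ∀ y : ℝ, y ^ (2:ℝ) = y ^ 2 := fun y => by
    rw [show (2:ℝ) = ((2:ℕ):ℝ) by norm_num, Real.rpow_natCast]
  have := lp.norm_rpow_eq_tsum (p := 2) (by norm_num) lam
  simpa [hconv] using this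

end Helpers
/-- The normalized Gaussian radial basis function translate `x ↦ √ε · exp(−(ε(x−ξ))²)`. -/
noncomputable def gaussTrans (ε ξ x : ℝ) : ℝ := Real.sqrt ε * Real.exp (-(ε * (x - ξ))^2)

/-- The RBF approximant `x ↦ Σ_{n=−N}^{N} z_n √ε φ(ε(x − nT/N))` with coefficients
`z` indexed by `Fin (2N+1)` (index `n` corresponds to the center `(n−N)T/N`). -/
noncomputable def rbfSum (T ε : ℝ) (N : ℕ) (z : EuclideanSpace ℂ (Fin (2*N+1))) (x : ℝ) : ℂ :=
  ∑ n : Fin (2*N+1), z n * ((gaussTrans ε ((((n : ℕ) : ℤ) - (N : ℤ)) * T / N) x : ℝ) : ℂ)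

/-- The regularized best-approximation quantity
`E_{N,τ}(f) = inf_z ( ‖f − Σ z_n √ε φ(ε(·−nT/N))‖_{L²(Ω)} + τ‖z‖_{ℓ²} )`. -/
noncomputable def Eapprox (T ε τ : ℝ) (N : ℕ) (Ω : Set ℝ) (f : ℝ → ℂ) : ℝ :=
  ⨅ z : EuclideanSpace ℂ (Fin (2*N+1)),
    ((eLpNorm (fun x => f x - rbfSum T ε N z x) 2 (volume.restrict Ω)).toReal + τ * ‖z‖)

/-- The complementary error function `erfc(z) = (2/√π) ∫_z^∞ e^{−t²} dt`. -/
noncomputable def erfc (z : ℝ) : ℝ := (2 / Real.sqrt π) * ∫ t in Set.Ioi z, Real.exp (-t^2)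

/-- The bi-infinite Gaussian series `h(x) = Σ_{n∈ℤ} λ_n √ε φ(ε(x − nT/N))`. -/
noncomputable def hfun (T ε : ℝ) (N : ℕ) (lam : lp (fun _ : ℤ => ℂ) 2) (x : ℝ) : ℂ :=
  ∑' n : ℤ, lam n * ((gaussTrans ε ((n : ℝ) * T / N) x : ℝ) : ℂ)

/-- The Fourier transform `f̂(ω) = ∫_ℝ f(x) e^{−iωx} dx`. -/
noncomputable def FT (g : ℝ → ℂ) (ω : ℝ) : ℂ :=
  ∫ x : ℝ, g x * Complex.exp (-Complex.I * (ω : ℂ) * (x : ℂ))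

section Helpers2

lemma rbf_eq_sum_Icc (T ε : ℝ) (N : ℕ) (lam : lp (fun _ : ℤ => ℂ) 2) (x : ℝ)
    (z : EuclideanSpace ℂ (Fin (2*N+1))) (hz : ∀ n : Fin (2*N+1), z n = lam ((n : ℤ) - N)) :
    rbfSum T ε N z x =
      ∑ m ∈ Finset.Icc (-(N:ℤ)) N, lam m * ((gaussTrans ε ((m : ℝ) * T / N) x : ℝ) : ℂ) := by
  rw [rbfSum]
  refine Finset.sum_bij' (fun (n : Fin (2*N+1)) (_ : n ∈ Finset.univ) => ((n : ℤ) - N))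
    (fun (m : ℤ) (hm : m ∈ Finset.Icc (-(N:ℤ)) N) =>
      (⟨(m + N).toNat, by have := Finset.mem_Icc.1 hm; omega⟩ : Fin (2*N+1)))
    (fun n _ => by have := n.isLt; simp only [Finset.mem_Icc]; omega)
    (fun m hm => Finset.mem_univ _) (fun n _ => by have := n.isLt; apply Fin.ext; simp)
    (fun m hm => by have := Finset.mem_Icc.1 hm; simp; omega)
    (fun n _ => ?_)
  rw [hz n]
  norm_num

lemma norm_z_le (N : ℕ) (lam : lp (fun _ : ℤ => ℂ) 2)
    (z : EuclideanSpace ℂ (Fin (2*N+1))) (hz : ∀ n : Fin (2*N+1), z n = lam ((n : ℤ) - N)) :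
    ‖z‖ ≤ ‖lam‖ := by
  rw [EuclideanSpace.norm_eq]
  have hinj : Function.Injective (fun n : Fin (2*N+1) => (n : ℤ) - N) := by
    intro a b hab
    simp only at hab
    apply Fin.ext
    omega
  have hle : ∑ n : Fin (2*N+1), ‖z n‖ ^ 2 ≤ ‖lam‖ ^ 2 := by
    rw [lam_norm_sq lam]
    have : ∑ n : Fin (2*N+1), ‖z n‖ ^ 2 =
        ∑ m ∈ Finset.image (fun n : Fin (2*N+1) => (n : ℤ) - N) Finset.univ, ‖lam m‖ ^ 2 := by
      rw [Finset.sum_image (fun a _ b _ h => hinj h)]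
      exact Finset.sum_congr rfl fun n _ => by rw [hz n]
    rw [this]
    exact Summable.sum_le_tsum _ (fun m _ => sq_nonneg _) (lam_sq_summable lam)
  calc Real.sqrt (∑ n : Fin (2*N+1), ‖z n‖ ^ 2) ≤ Real.sqrt (‖lam‖ ^ 2) :=
        Real.sqrt_le_sqrt hle
    _ = ‖lam‖ := Real.sqrt_sq (norm_nonneg _)

end Helpers2
set_option maxHeartbeats 2000000 in
/-- Lemma `lem:any_g_and_any_lambda`, second part. -/
theorem stmt_1 (T B ε τ : ℝ) (N : ℕ) (Ω : Set ℝ) (hΩmeas : MeasurableSet Ω)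
    (hT : 0 < T) (hΩ : Ω ⊆ Set.Ioo (-T) T)
    (hB : IsLUB ((fun x => |x|) '' Ω) B) (hB0 : 0 < B) (hBT : B < T)
    (hN : 0 < N) (hε : 0 < ε) (hτ : 0 < τ)
    (f g : ℝ → ℂ) (hf : MemLp f 2 (volume.restrict Ω)) (hg : MemLp g 2 volume)
    (hgf : ∀ᵐ x ∂(volume.restrict Ω), g x = f x)
    (lam : lp (fun _ : ℤ => ℂ) 2)
    (hh : MemLp (hfun T ε N lam) 2 volume)
    (hεge : (1 / (Real.sqrt 2 * (T - B))) *
        Real.sqrt (Real.log (Real.sqrt (2*π) * B * N / (T * τ^2))) ≤ ε) :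
    Eapprox T ε τ N Ω f ≤
      (eLpNorm (fun x => g x - hfun T ε N lam x) 2 volume).toReal + 2 * τ * ‖lam‖ := by
  classical
  have hNR : (0:ℝ) < (N:ℝ) := by exact_mod_cast hN
  set δ : ℝ := T / N with hδdef
  have hδ : 0 < δ := by positivity
  have hNδ : (N:ℝ) * δ = T := by rw [hδdef]; field_simp
  set c : ℝ := T - B with hcdef
  have hc : 0 < c := by rw [hcdef]; linarith
  set b : ℝ := 2 * ε ^ 2 with hbdef
  have hb : 0 < b := by rw [hbdef]; positivity
  set tailS : ℝ := ∑' k : ℕ, Real.exp (-b * (c + ((k:ℝ) + 1) * δ) ^ 2) with htaildef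
  have htail0 : 0 ≤ tailS := tsum_nonneg fun k => (Real.exp_pos _).le
  -- numeric bound
  have htailS_le : tailS ≤ (1/δ) * (Real.exp (-b * c^2) * (Real.sqrt (π / b) / 2)) := by
    calc tailS ≤ (1/δ) * ∫ u in Set.Ioi c, Real.exp (-b * u^2) :=
        Real.tsum_le_of_sum_range_le (fun k => (Real.exp_pos _).le)
          (fun K => sum_gauss_le_integral b c δ hb hc hδ K)
      _ ≤ _ := mul_le_mul_of_nonneg_left (integral_gauss_Ioi_le b c hb hc.le) (by positivity)
  have hsqb : Real.sqrt b = Real.sqrt 2 * ε := by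
    rw [hbdef, Real.sqrt_mul (by norm_num), Real.sqrt_sq hε.le]
  have hsqpb : Real.sqrt (π / b) = Real.sqrt π / (Real.sqrt 2 * ε) := by
    rw [Real.sqrt_div Real.pi_pos.le, hsqb]
  have hs2 : (0:ℝ) < Real.sqrt 2 := by positivity
  have hspi : (0:ℝ) < Real.sqrt π := Real.sqrt_pos.2 Real.pi_pos
  have hs2pi : Real.sqrt (2*π) = Real.sqrt 2 * Real.sqrt π := Real.sqrt_mul (by norm_num) π
  set A : ℝ := Real.sqrt (2*π) * B * N / (T * τ^2) with hAdef
  have hA0 : 0 < A := by rw [hAdef, hs2pi]; positivity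
  have hAτ : A * τ^2 = Real.sqrt (2*π) * B * N / T := by
    rw [hAdef]; field_simp
  have hE2 : Real.exp (-b * c^2) * (Real.sqrt (2*π) * B * N / T) ≤ τ^2 := by
    rcases le_or_gt A 1 with hA1 | hA1
    · have hexp : Real.exp (-b * c^2) ≤ 1 := by
        apply Real.exp_le_one_iff.2
        nlinarith [sq_nonneg c]
      have h3 : (0:ℝ) < τ^2 := by positivity
      calc Real.exp (-b * c^2) * (Real.sqrt (2*π) * B * N / T)
          = Real.exp (-b * c^2) * (A * τ^2) := by rw [hAτ]
        _ ≤ 1 * (1 * τ^2) := by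
            apply mul_le_mul hexp ?_ (by positivity) (by norm_num)
            calc A * τ^2 ≤ 1 * τ^2 := mul_le_mul_of_nonneg_right hA1 h3.le
              _ = 1 * τ^2 := rfl
        _ = τ^2 := by ring
    · have hlog : 0 < Real.log A := Real.log_pos hA1
      have hεge2 : (1 / (Real.sqrt 2 * c)) * Real.sqrt (Real.log A) ≤ ε := by
        rw [hcdef, hAdef]; exact hεge
      have h1 : Real.sqrt (Real.log A) ≤ ε * (Real.sqrt 2 * c) := by
        rw [one_div, inv_mul_eq_div, div_le_iff₀ (by positivity)] at hεge2
        linarith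
      have h2 := mul_self_le_mul_self (Real.sqrt_nonneg (Real.log A)) h1
      rw [Real.mul_self_sqrt hlog.le] at h2
      have hsq : Real.log A ≤ 2 * ε^2 * c^2 := by
        have h22 : Real.sqrt 2 * Real.sqrt 2 = 2 := Real.mul_self_sqrt (by norm_num)
        nlinarith [h2]
      have hexp : Real.exp (-b * c^2) ≤ A⁻¹ := by
        rw [show A⁻¹ = Real.exp (-Real.log A) by rw [Real.exp_neg, Real.exp_log hA0]]
        apply Real.exp_le_exp.2
        have : 0 ≤ 2 * ε^2 * c^2 - Real.log A := by linarith
        rw [hbdef]; linarith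
      calc Real.exp (-b * c^2) * (Real.sqrt (2*π) * B * N / T)
          = Real.exp (-b * c^2) * (A * τ^2) := by rw [hAτ]
        _ ≤ A⁻¹ * (A * τ^2) := mul_le_mul_of_nonneg_right hexp (by positivity)
        _ = τ^2 := by field_simp
  have hkey : 2*B*(2*ε*tailS) ≤ τ^2 := by
    have h1 : 2*B*(2*ε*tailS)
        ≤ 2*B*(2*ε*((1/δ) * (Real.exp (-b*c^2) * (Real.sqrt (π/b)/2)))) := by
      apply mul_le_mul_of_nonneg_left
        (mul_le_mul_of_nonneg_left htailS_le (by positivity)) (by positivity)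
    have h2 : 2*B*(2*ε*((1/δ) * (Real.exp (-b*c^2) * (Real.sqrt (π/b)/2))))
        = Real.exp (-b*c^2) * (Real.sqrt (2*π) * B * N / T) := by
      rw [hsqpb, hδdef, hs2pi]
      field_simp
      have h22 : Real.sqrt 2 * Real.sqrt 2 = 2 := Real.mul_self_sqrt (by norm_num)
      linear_combination (-1:ℝ) * h22
    linarith [hE2]
  have hτb : Real.sqrt (2*B) * Real.sqrt (2*ε*tailS) ≤ τ := by
    rw [← Real.sqrt_mul (by positivity)]
    calc Real.sqrt (2*B*(2*ε*tailS)) ≤ Real.sqrt (τ^2) := Real.sqrt_le_sqrt hkey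
      _ = τ := Real.sqrt_sq hτ.le
  -- the coefficient vector
  set z : EuclideanSpace ℂ (Fin (2*N+1)) := (WithLp.toLp 2 (fun n : Fin (2*N+1) => lam ((n:ℤ) - N))) with hzdef
  have hz : ∀ n : Fin (2*N+1), z n = lam ((n:ℤ) - N) := fun n => rfl
  -- pointwise facts
  have hGT : ∀ (m : ℤ) (x : ℝ), gaussTrans ε ((m:ℝ) * T / N) x
      = Real.sqrt ε * Real.exp (-(ε * (x - m * δ)) ^ 2) := by
    intro m x
    rw [gaussTrans, hδdef, mul_div_assoc]
  have hsq_g1 : ∀ t : ℝ, (Real.sqrt ε * Real.exp (-(ε * t) ^ 2)) ^ 2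
      = ε * Real.exp (-b * t ^ 2) := by
    intro t
    rw [mul_pow, Real.sq_sqrt hε.le, pow_two, ← Real.exp_add, hbdef]
    congr 1
    ring
  have hg1sum : ∀ x : ℝ, Summable fun m : ℤ =>
      Real.sqrt ε * Real.exp (-(ε * (x - m*δ)) ^ 2) := by
    intro x
    apply ((summable_exp_neg_sq_int (ε^2) δ x (by positivity) hδ).mul_left (Real.sqrt ε)).congr
    intro m
    congr 2
    ring
  have hg2sum : ∀ x : ℝ, Summable fun m : ℤ => ε * Real.exp (-b * (x - m*δ) ^ 2) :=
    fun x => (summable_exp_neg_sq_int b δ x hb hδ).mul_left ε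
  have hFnorm : ∀ (x : ℝ) (m : ℤ), ‖lam m * ((gaussTrans ε ((m:ℝ) * T / N) x : ℝ) : ℂ)‖
      = ‖lam m‖ * (Real.sqrt ε * Real.exp (-(ε * (x - m*δ)) ^ 2)) := by
    intro x m
    rw [norm_mul, hGT m x, Complex.norm_real, Real.norm_eq_abs,
      abs_of_nonneg (by positivity)]
  have hFnormsum : ∀ x : ℝ, Summable fun m : ℤ =>
      ‖lam m * ((gaussTrans ε ((m:ℝ) * T / N) x : ℝ) : ℂ)‖ := by
    intro x
    apply Summable.of_nonneg_of_le (fun m => norm_nonneg _) (fun m => ?_)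
      ((hg1sum x).mul_left ‖lam‖)
    rw [hFnorm x m]
    apply mul_le_mul_of_nonneg_right (lp.norm_apply_le_norm (by norm_num) lam m) (by positivity)
  have hFsum : ∀ x : ℝ, Summable fun m : ℤ =>
      lam m * ((gaussTrans ε ((m:ℝ) * T / N) x : ℝ) : ℂ) :=
    fun x => (hFnormsum x).of_norm
  set S : Finset ℤ := Finset.Icc (-(N:ℤ)) N with hSdef
  -- pointwise tail bound
  have hptwise : ∀ x : ℝ, |x| ≤ B →
      ‖hfun T ε N lam x - rbfSum T ε N z x‖ ≤ ‖lam‖ * Real.sqrt (2*ε*tailS) := by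
    intro x hxB
    have hrbf := rbf_eq_sum_Icc T ε N lam x z hz
    have hdec : hfun T ε N lam x - rbfSum T ε N z x
        = ∑' m : ↑((↑S : Set ℤ))ᶜ,
            (lam ↑m * ((gaussTrans ε (((↑m : ℤ):ℝ) * T / N) x : ℝ) : ℂ)) := by
      have hcompl := Summable.sum_add_tsum_compl (s := S) (hFsum x)
      rw [hrbf, show hfun T ε N lam x
        = ∑' m : ℤ, lam m * ((gaussTrans ε ((m:ℝ) * T / N) x : ℝ) : ℂ) from rfl, ← hcompl, hSdef]
      ring
    rw [hdec]
    have hsub2 : Summable fun m : ↑((↑S : Set ℤ))ᶜ =>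
        (Real.sqrt ε * Real.exp (-(ε * (x - (↑m : ℤ)*δ)) ^ 2)) ^ 2 := by
      have hZ : Summable fun m : ℤ => (Real.sqrt ε * Real.exp (-(ε * (x - m*δ)) ^ 2)) ^ 2 :=
        (hg2sum x).congr fun m => (hsq_g1 (x - m*δ)).symm
      exact hZ.subtype _
    calc ‖∑' m : ↑((↑S : Set ℤ))ᶜ,
            (lam ↑m * ((gaussTrans ε (((↑m : ℤ):ℝ) * T / N) x : ℝ) : ℂ))‖
        ≤ ∑' m : ↑((↑S : Set ℤ))ᶜ,
            ‖lam ↑m‖ * (Real.sqrt ε * Real.exp (-(ε * (x - (↑m : ℤ)*δ)) ^ 2)) := by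
          refine le_trans (norm_tsum_le_tsum_norm ((hFnormsum x).subtype _))
            (le_of_eq (tsum_congr fun m => hFnorm x ↑m))
      _ ≤ Real.sqrt (∑' m : ↑((↑S : Set ℤ))ᶜ, ‖lam ↑m‖^2) *
            Real.sqrt (∑' m : ↑((↑S : Set ℤ))ᶜ,
              (Real.sqrt ε * Real.exp (-(ε * (x - (↑m : ℤ)*δ)) ^ 2))^2) :=
          tsum_mul_le_sqrt_mul_sqrt _ _ (fun i => norm_nonneg _) (fun i => by positivity)
            ((lam_sq_summable lam).subtype _) hsub2
      _ ≤ ‖lam‖ * Real.sqrt (2*ε*tailS) := by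
          apply mul_le_mul ?_ ?_ (Real.sqrt_nonneg _) (norm_nonneg _)
          · calc Real.sqrt (∑' m : ↑((↑S : Set ℤ))ᶜ, ‖lam ↑m‖^2)
                ≤ Real.sqrt (∑' m : ℤ, ‖lam m‖^2) :=
                  Real.sqrt_le_sqrt (tsum_subtype_le_of_nonneg _ (fun m => sq_nonneg _)
                    (lam_sq_summable lam))
              _ = ‖lam‖ := by rw [← lam_norm_sq]; exact Real.sqrt_sq (norm_nonneg _)
          · apply Real.sqrt_le_sqrt
            have hQsum : Summable fun m : ℤ => ε * Real.exp (-b * (|(m:ℝ)| * δ - B) ^ 2) :=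
              (summable_abs_gauss δ b B hb hδ).mul_left ε
            calc ∑' m : ↑((↑S : Set ℤ))ᶜ,
                  (Real.sqrt ε * Real.exp (-(ε * (x - (↑m : ℤ)*δ)) ^ 2))^2
                = ∑' m : ↑((↑S : Set ℤ))ᶜ, ε * Real.exp (-b * (x - (↑m : ℤ)*δ) ^ 2) :=
                  tsum_congr fun m => hsq_g1 _
              _ ≤ ∑' m : ↑((↑S : Set ℤ))ᶜ, ε * Real.exp (-b * (|((↑m : ℤ):ℝ)| * δ - B) ^ 2) := by
                  apply Summable.tsum_le_tsum ?_ (((hg2sum x).subtype _)) (hQsum.subtype _)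
                  intro m
                  apply mul_le_mul_of_nonneg_left ?_ hε.le
                  apply Real.exp_le_exp.2
                  have hm : (↑m : ℤ) ∉ S := m.2
                  have h1 : (N:ℤ) + 1 ≤ |(↑m : ℤ)| := by
                    have hm' : ¬(-(N:ℤ) ≤ (↑m : ℤ) ∧ (↑m : ℤ) ≤ (N:ℤ)) := by
                      simpa [hSdef, Finset.mem_Icc] using hm
                    rw [Int.abs_eq_natAbs]
                    omega
                  have hmabs : (N:ℝ) + 1 ≤ |((↑m : ℤ):ℝ)| := by
                    rw [← Int.cast_abs]
                    exact_mod_cast h1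
                  have hd0 : 0 ≤ |((↑m : ℤ):ℝ)| * δ - B := by
                    nlinarith [mul_le_mul_of_nonneg_right hmabs hδ.le]
                  have hd1 : |((↑m : ℤ):ℝ)| * δ - B ≤ |x - ((↑m : ℤ):ℝ) * δ| := by
                    have ha1 : |((↑m : ℤ):ℝ) * δ| - |x| ≤ |((↑m : ℤ):ℝ) * δ - x| :=
                      abs_sub_abs_le_abs_sub _ _
                    rw [abs_mul, abs_of_pos hδ, abs_sub_comm] at ha1
                    linarith
                  have hd2 : (|((↑m : ℤ):ℝ)| * δ - B)^2 ≤ (x - ((↑m : ℤ):ℝ)*δ)^2 := by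
                    rw [← sq_abs (x - ((↑m : ℤ):ℝ)*δ)]
                    exact pow_le_pow_left₀ hd0 hd1 2
                  nlinarith [mul_le_mul_of_nonneg_left hd2 hb.le]
              _ = ε * ∑' m : ↑((↑S : Set ℤ))ᶜ, Real.exp (-b * (|((↑m : ℤ):ℝ)| * δ - B) ^ 2) :=
                  tsum_mul_left
              _ = ε * (2 * ∑' k : ℕ, Real.exp (-b * (((N:ℝ) + 1 + (k:ℝ)) * δ - B) ^ 2)) := by
                  rw [hSdef, tsum_compl_gauss N δ b B hb hδ]
              _ = 2*ε*tailS := by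
                  rw [htaildef, show (∑' k : ℕ, Real.exp (-b * (((N:ℝ) + 1 + (k:ℝ)) * δ - B) ^ 2))
                    = ∑' k : ℕ, Real.exp (-b * (c + ((k:ℝ) + 1) * δ) ^ 2) from
                    tsum_congr fun k => by
                      rw [show ((N:ℝ) + 1 + (k:ℝ)) * δ - B = c + ((k:ℝ) + 1) * δ from by
                        rw [hcdef]; linear_combination hNδ]]
                  ring
  -- measurability
  have hcont : Continuous (fun x => rbfSum T ε N z x) := by
    simp only [rbfSum, gaussTrans]
    fun_prop
  have hmeas_h : AEStronglyMeasurable (hfun T ε N lam) (volume.restrict Ω) :=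
    hh.aestronglyMeasurable.restrict
  have hmeas1 : AEStronglyMeasurable (fun x => g x - hfun T ε N lam x) (volume.restrict Ω) :=
    hg.aestronglyMeasurable.restrict.sub hmeas_h
  have hmeas2 : AEStronglyMeasurable (fun x => hfun T ε N lam x - rbfSum T ε N z x)
      (volume.restrict Ω) := hmeas_h.sub hcont.aestronglyMeasurable.restrict
  -- eLpNorm chain
  have hstep1 : eLpNorm (fun x => f x - rbfSum T ε N z x) 2 (volume.restrict Ω)
      = eLpNorm (fun x => (g x - hfun T ε N lam x) + (hfun T ε N lam x - rbfSum T ε N z x)) 2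
        (volume.restrict Ω) := by
    apply eLpNorm_congr_ae
    filter_upwards [hgf] with x hx
    rw [← hx]
    ring
  have hstep2 := eLpNorm_add_le hmeas1 hmeas2 (by norm_num : (1:ENNReal) ≤ 2)
  have hstep3 : eLpNorm (fun x => g x - hfun T ε N lam x) 2 (volume.restrict Ω)
      ≤ eLpNorm (fun x => g x - hfun T ε N lam x) 2 volume :=
    eLpNorm_mono_measure _ Measure.restrict_le_self
  have hvol : volume Ω ≤ ENNReal.ofReal (2*B) := by
    have hsubΩ : Ω ⊆ Set.Icc (-B) B := by
      intro x hx
      have hub : |x| ≤ B := hB.1 ⟨x, hx, rfl⟩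
      exact abs_le.1 hub
    calc volume Ω ≤ volume (Set.Icc (-B) B) := measure_mono hsubΩ
      _ = ENNReal.ofReal (B - -B) := Real.volume_Icc
      _ = ENNReal.ofReal (2*B) := by congr 1; ring
  have hstep4 : eLpNorm (fun x => hfun T ε N lam x - rbfSum T ε N z x) 2 (volume.restrict Ω)
      ≤ ENNReal.ofReal (τ * ‖lam‖) := by
    have hbound : ∀ᵐ x ∂(volume.restrict Ω),
        ‖hfun T ε N lam x - rbfSum T ε N z x‖ ≤ ‖lam‖ * Real.sqrt (2*ε*tailS) := by
      filter_upwards [ae_restrict_mem hΩmeas] with x hx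
      exact hptwise x (hB.1 ⟨x, hx, rfl⟩)
    calc eLpNorm (fun x => hfun T ε N lam x - rbfSum T ε N z x) 2 (volume.restrict Ω)
        ≤ (volume.restrict Ω) Set.univ ^ (2:ENNReal).toReal⁻¹ *
            ENNReal.ofReal (‖lam‖ * Real.sqrt (2*ε*tailS)) := eLpNorm_le_of_ae_bound hbound
      _ ≤ ENNReal.ofReal (2*B) ^ ((1:ℝ)/2) *
            ENNReal.ofReal (‖lam‖ * Real.sqrt (2*ε*tailS)) := by
          apply mul_le_mul_left
          rw [Measure.restrict_apply_univ, show ((2:ENNReal).toReal)⁻¹ = (1:ℝ)/2 by norm_num]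
          exact ENNReal.rpow_le_rpow hvol (by norm_num)
      _ = ENNReal.ofReal (Real.sqrt (2*B) * (‖lam‖ * Real.sqrt (2*ε*tailS))) := by
          rw [ENNReal.ofReal_rpow_of_nonneg (by positivity) (by norm_num),
            ← Real.sqrt_eq_rpow, ← ENNReal.ofReal_mul (Real.sqrt_nonneg _)]
      _ ≤ ENNReal.ofReal (τ * ‖lam‖) := by
          apply ENNReal.ofReal_le_ofReal
          calc Real.sqrt (2*B) * (‖lam‖ * Real.sqrt (2*ε*tailS))
              = (Real.sqrt (2*B) * Real.sqrt (2*ε*tailS)) * ‖lam‖ := by ring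
            _ ≤ τ * ‖lam‖ := mul_le_mul_of_nonneg_right hτb (norm_nonneg _)
  have hchain : eLpNorm (fun x => f x - rbfSum T ε N z x) 2 (volume.restrict Ω)
      ≤ eLpNorm (fun x => g x - hfun T ε N lam x) 2 volume + ENNReal.ofReal (τ * ‖lam‖) := by
    rw [hstep1]
    exact le_trans hstep2 (add_le_add hstep3 hstep4)
  have hfin : eLpNorm (fun x => g x - hfun T ε N lam x) 2 volume ≠ ⊤ := (hg.sub hh).2.ne
  have htoReal : (eLpNorm (fun x => f x - rbfSum T ε N z x) 2 (volume.restrict Ω)).toReal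
      ≤ (eLpNorm (fun x => g x - hfun T ε N lam x) 2 volume).toReal + τ * ‖lam‖ := by
    have h1 := ENNReal.toReal_mono (ENNReal.add_ne_top.2 ⟨hfin, ENNReal.ofReal_ne_top⟩) hchain
    rwa [ENNReal.toReal_add hfin ENNReal.ofReal_ne_top,
      ENNReal.toReal_ofReal (by positivity)] at h1
  have hbdd : BddBelow (Set.range fun w : EuclideanSpace ℂ (Fin (2*N+1)) =>
      (eLpNorm (fun x => f x - rbfSum T ε N w x) 2 (volume.restrict Ω)).toReal + τ * ‖w‖) := by
    refine ⟨0, ?_⟩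
    rintro r ⟨w, rfl⟩
    positivity
  have hEle : Eapprox T ε τ N Ω f ≤
      (eLpNorm (fun x => f x - rbfSum T ε N z x) 2 (volume.restrict Ω)).toReal + τ * ‖z‖ :=
    ciInf_le hbdd z
  have hzn : ‖z‖ ≤ ‖lam‖ := norm_z_le N lam z hz
  calc Eapprox T ε τ N Ω f
      ≤ (eLpNorm (fun x => f x - rbfSum T ε N z x) 2 (volume.restrict Ω)).toReal + τ * ‖z‖ :=
        hEle
    _ ≤ ((eLpNorm (fun x => g x - hfun T ε N lam x) 2 volume).toReal + τ * ‖lam‖) + τ * ‖lam‖ :=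
        add_le_add htoReal (mul_le_mul_of_nonneg_left hzn hτ.le)
    _ = (eLpNorm (fun x => g x - hfun T ε N lam x) 2 volume).toReal + 2 * τ * ‖lam‖ := by ring
end

section
/- Let T > 0, 0 < B < T, ε > 0, let N be a positive integer, and let Ω ⊆ [−B, B] be measurable. Then for every λ = (λ_n)_{n∈ℤ} ∈ ℓ²(ℤ), Σ_{|n| > N} |λ_n| √ε ‖exp(−ε²(· − nT/N)²)‖_{L²(Ω)} ≤ sqrt( (√(2π) B N / T) · erfc(√2 ε (T − B)) ) · ‖λ‖_{ℓ²}. -/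
open MeasureTheory Real Filter

/-- Cauchy–Schwarz for tsums of nonnegative reals. -/
lemma tsum_CS {ι : Type*} (f g : ι → ℝ) (hf : ∀ i, 0 ≤ f i) (hg : ∀ i, 0 ≤ g i)
    (hf2 : Summable fun i => f i ^ 2) (hg2 : Summable fun i => g i ^ 2) :
    ∑' i, f i * g i ≤ Real.sqrt (∑' i, f i ^ 2) * Real.sqrt (∑' i, g i ^ 2) := by
  have hfg : Summable (fun i => f i * g i) := by
    refine Summable.of_nonneg_of_le (fun i => mul_nonneg (hf i) (hg i)) (fun i => ?_)
      ((hf2.add hg2).div_const 2)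
    nlinarith [sq_nonneg (f i - g i)]
  refine Summable.tsum_le_of_sum_le hfg (fun s => ?_)
  calc ∑ i ∈ s, f i * g i ≤ Real.sqrt (∑ i ∈ s, f i ^ 2) * Real.sqrt (∑ i ∈ s, g i ^ 2) :=
        Real.sum_mul_le_sqrt_mul_sqrt s f g
    _ ≤ _ := by
        gcongr <;>
          [exact hf2.sum_le_tsum s (fun i _ => sq_nonneg _);
           exact hg2.sum_le_tsum s (fun i _ => sq_nonneg _)]

lemma aux_integral (ε d : ℝ) (hε : 0 < ε) :
    ∫ t in Set.Ioi d, Real.exp (-(2*ε^2) * t^2)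
      = (Real.sqrt 2 * ε)⁻¹ * (Real.sqrt π / 2 * erfc (Real.sqrt 2 * ε * d)) := by
  have hc : 0 < Real.sqrt 2 * ε := mul_pos (Real.sqrt_pos.2 two_pos) hε
  have h1 : ∀ t : ℝ, Real.exp (-(2*ε^2) * t^2)
      = (fun x => Real.exp (-x^2)) ((Real.sqrt 2 * ε) * t) := by
    intro t
    simp only
    congr 1
    rw [mul_pow, mul_pow, Real.sq_sqrt (by norm_num : (0:ℝ) ≤ 2)]
    ring
  have hpi : (0:ℝ) < Real.sqrt π := Real.sqrt_pos.2 Real.pi_pos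
  calc ∫ t in Set.Ioi d, Real.exp (-(2*ε^2) * t^2)
      = ∫ t in Set.Ioi d, (fun x => Real.exp (-x^2)) ((Real.sqrt 2 * ε) * t) := by
        simp_rw [h1]
    _ = (Real.sqrt 2 * ε)⁻¹ • ∫ x in Set.Ioi ((Real.sqrt 2 * ε) * d), Real.exp (-x^2) :=
        by exact MeasureTheory.integral_comp_mul_left_Ioi (fun x => Real.exp (-x^2)) d hc
    _ = (Real.sqrt 2 * ε)⁻¹ * (Real.sqrt π / 2 * erfc (Real.sqrt 2 * ε * d)) := by
        rw [smul_eq_mul, erfc]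
        congr 1
        field_simp

lemma aux_sum_le (ε d h : ℝ) (hε : 0 < ε) (hd : 0 < d) (hh : 0 < h) :
    Summable (fun k : ℕ => Real.exp (-(2*ε^2) * (d + (k+1)*h)^2)) ∧
    ∑' k : ℕ, Real.exp (-(2*ε^2) * (d + (k+1)*h)^2)
      ≤ h⁻¹ * ∫ t in Set.Ioi d, Real.exp (-(2*ε^2) * t^2) := by
  have h2ε : (0:ℝ) < 2*ε^2 := by positivity
  have hint : Integrable (fun t : ℝ => Real.exp (-(2*ε^2) * t^2)) :=
    integrable_exp_neg_mul_sq h2ε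
  have key : ∀ n : ℕ, ∑ k ∈ Finset.range n, Real.exp (-(2*ε^2) * (d + (k+1)*h)^2)
      ≤ h⁻¹ * ∫ t in Set.Ioi d, Real.exp (-(2*ε^2) * t^2) := by
    intro n
    set f : ℝ → ℝ := fun u => Real.exp (-(2*ε^2) * (h*u + d)^2) with hf
    have hmono : AntitoneOn f (Set.Icc 0 (0 + (n:ℝ))) := by
      intro u hu v hv huv
      simp only [hf]
      apply Real.exp_le_exp.2
      have h0 : h*u+d ≤ h*v+d := by nlinarith [hu.1]
      have h1 : (h*u+d)^2 ≤ (h*v+d)^2 :=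
        pow_le_pow_left₀ (by nlinarith [hu.1] : (0:ℝ) ≤ h*u+d) h0 2
      nlinarith
    have hsum := hmono.sum_le_integral
    have e1 : ∑ k ∈ Finset.range n, Real.exp (-(2*ε^2) * (d + (k+1)*h)^2)
        = ∑ i ∈ Finset.range n, f (0 + (i + 1 : ℕ)) := by
      refine Finset.sum_congr rfl (fun i _ => ?_)
      simp only [hf]
      congr 2
      push_cast
      ring
    have e2 : (∫ x in (0:ℝ)..(0 + (n:ℝ)), f x)
        = h⁻¹ * ∫ x in d..(h*(n:ℝ)+d), Real.exp (-(2*ε^2) * x^2) := by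
      simp only [hf, zero_add]
      rw [intervalIntegral.integral_comp_mul_add (fun x => Real.exp (-(2*ε^2) * x^2)) hh.ne' d]
      simp [mul_zero, zero_add, smul_eq_mul]
    have e3 : (∫ x in d..(h*(n:ℝ)+d), Real.exp (-(2*ε^2) * x^2))
        ≤ ∫ t in Set.Ioi d, Real.exp (-(2*ε^2) * t^2) := by
      rw [intervalIntegral.integral_of_le (by nlinarith : d ≤ h*(n:ℝ)+d)]
      refine setIntegral_mono_set hint.integrableOn
        (Eventually.of_forall (fun x => (Real.exp_pos _).le))
        (HasSubset.Subset.eventuallyLE Set.Ioc_subset_Ioi_self)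
    calc ∑ k ∈ Finset.range n, Real.exp (-(2*ε^2) * (d + (k+1)*h)^2)
        = ∑ i ∈ Finset.range n, f (0 + (i + 1 : ℕ)) := e1
      _ ≤ ∫ x in (0:ℝ)..(0 + (n:ℝ)), f x := hsum
      _ = h⁻¹ * ∫ x in d..(h*(n:ℝ)+d), Real.exp (-(2*ε^2) * x^2) := e2
      _ ≤ h⁻¹ * ∫ t in Set.Ioi d, Real.exp (-(2*ε^2) * t^2) := by
          exact mul_le_mul_of_nonneg_left e3 (by positivity)
  exact ⟨summable_of_sum_range_le (fun k => (Real.exp_pos _).le) key,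
    Real.tsum_le_of_sum_range_le (fun k => (Real.exp_pos _).le) key⟩

/-- tail bound for the ℓ¹-type sum of Gaussian translate norms over `|n| > N`. -/
theorem stmt_5 (T B ε : ℝ) (N : ℕ) (hT : 0 < T) (hB0 : 0 < B) (hBT : B < T)
    (hε : 0 < ε) (hN : 0 < N) (Ω : Set ℝ) (hΩmeas : MeasurableSet Ω)
    (hΩ : Ω ⊆ Set.Icc (-B) B) (lam : lp (fun _ : ℤ => ℂ) 2) :
    (∑' n : {n : ℤ // (N : ℤ) < |n|},
        ‖lam (n : ℤ)‖ * Real.sqrt ε *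
          (eLpNorm (fun x => Real.exp (-(ε * (x - (n : ℤ) * T / N))^2)) 2
            (volume.restrict Ω)).toReal) ≤
      Real.sqrt (Real.sqrt (2*π) * B * N / T * erfc (Real.sqrt 2 * ε * (T - B))) * ‖lam‖ := by
  have hNR : (0:ℝ) < N := Nat.cast_pos.2 hN
  set d : ℝ := T - B with hdd
  have hd : 0 < d := sub_pos.2 hBT
  set hstep : ℝ := T / N with hhs
  have hh : 0 < hstep := div_pos hT hNR
  set q : ℝ → ℝ := fun t => Real.exp (-(2*ε^2) * t^2) with hq
  -- the ℤ-indexed dominating sequence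
  set g : ℤ → ℝ := fun m => if (N:ℤ) < |m| then 2*B*ε * q ((|m| : ℝ) * T / N - B) else 0
    with hgdef
  have hg0 : ∀ m : ℤ, 0 ≤ g m := by
    intro m
    simp only [hgdef, hq]
    split
    · positivity
    · exact le_refl 0
  have hval : ∀ k : ℕ, ((k:ℝ) + N + 1) * T / N - B = d + (k+1)*hstep := by
    intro k
    simp only [hhs, hdd]
    field_simp
    ring
  obtain ⟨hcsum, hcle⟩ := aux_sum_le ε d hstep hε hd hh
  have hpos : ∀ k : ℕ, g ((k + (N+1) : ℕ) : ℤ) = 2*B*ε * q (d + (k+1)*hstep) := by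
    intro k
    have h1 : (N:ℤ) < |((k + (N+1) : ℕ) : ℤ)| := by
      rw [abs_of_nonneg (Int.natCast_nonneg _)]
      exact_mod_cast (by omega : N < k + (N+1))
    simp only [hgdef, if_pos h1]
    congr 1
    rw [← hval k]
    push_cast
    rw [abs_of_nonneg (by positivity)]
    ring_nf
  have hneg : ∀ k : ℕ, g (-((((k + N : ℕ)):ℤ) + 1)) = 2*B*ε * q (d + (k+1)*hstep) := by
    intro k
    have h1 : (N:ℤ) < |(-((((k + N : ℕ)):ℤ) + 1))| := by
      rw [abs_neg, abs_of_nonneg (by positivity)]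
      push_cast
      omega
    simp only [hgdef, if_pos h1]
    congr 1
    rw [← hval k]
    push_cast
    rw [abs_neg, abs_of_nonneg (by positivity)]
  have hgsum_pos : Summable (fun k : ℕ => g (k : ℤ)) := by
    refine (summable_nat_add_iff (N+1)).1 ?_
    exact ((hcsum.mul_left (2*B*ε)).congr (fun k => (hpos k).symm))
  have hgsum_neg : Summable (fun k : ℕ => g (-((k:ℤ) + 1))) := by
    refine (summable_nat_add_iff N).1 ?_
    exact ((hcsum.mul_left (2*B*ε)).congr (fun k => (hneg k).symm))
  have hgsummable : Summable g := Summable.of_nat_of_neg_add_one hgsum_pos hgsum_neg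
  have ht_pos : ∑' k : ℕ, g (k : ℤ) = 2*B*ε * ∑' k : ℕ, q (d + (k+1)*hstep) := by
    rw [← Summable.sum_add_tsum_nat_add (N+1) hgsum_pos]
    have hz : ∑ i ∈ Finset.range (N+1), g ((i:ℕ) : ℤ) = 0 := by
      refine Finset.sum_eq_zero (fun i hi => ?_)
      simp only [Finset.mem_range] at hi
      have hni : ¬ ((N:ℤ) < |((i:ℕ):ℤ)|) := by
        rw [abs_of_nonneg (Int.natCast_nonneg _)]
        exact_mod_cast (by omega : ¬ (N < i))
      simp only [hgdef]
      rw [if_neg hni]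
    rw [hz, zero_add, tsum_congr hpos, tsum_mul_left]
  have ht_neg : ∑' k : ℕ, g (-((k:ℤ) + 1)) = 2*B*ε * ∑' k : ℕ, q (d + (k+1)*hstep) := by
    rw [← Summable.sum_add_tsum_nat_add N hgsum_neg]
    have hz : ∑ i ∈ Finset.range N, g (-(((i:ℕ):ℤ) + 1)) = 0 := by
      refine Finset.sum_eq_zero (fun i hi => ?_)
      simp only [Finset.mem_range] at hi
      have hni : ¬ ((N:ℤ) < |(-(((i:ℕ):ℤ) + 1))|) := by
        rw [abs_neg, abs_of_nonneg (by positivity)]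
        omega
      simp only [hgdef]
      rw [if_neg hni]
    rw [hz, zero_add, tsum_congr hneg, tsum_mul_left]
  have htg : ∑' m : ℤ, g m = 4*B*ε * ∑' k : ℕ, q (d + (k+1)*hstep) := by
    rw [tsum_of_nat_of_neg_add_one hgsum_pos hgsum_neg, ht_pos, ht_neg]
    ring
  -- per-index bound on the squared summand
  have hb : ∀ n : {n : ℤ // (N : ℤ) < |n|},
      (Real.sqrt ε * (eLpNorm (fun x => Real.exp (-(ε * (x - (n : ℤ) * T / N))^2)) 2
        (volume.restrict Ω)).toReal) ^ 2 ≤ g (n : ℤ) := by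
    intro n
    set ξ : ℝ := ((n : ℤ) : ℝ) * T / (N:ℝ) with hξ
    have hBξ : B < |ξ| := by
      have hn1 : (N:ℝ) + 1 ≤ |((n:ℤ):ℝ)| := by
        rw [← Int.cast_abs]
        exact_mod_cast (by omega : (N:ℤ) + 1 ≤ |(n:ℤ)|)
      have : |ξ| = |((n:ℤ):ℝ)| * T / N := by
        rw [hξ, abs_div, abs_mul, abs_of_pos hT, abs_of_pos hNR]
      rw [this, lt_div_iff₀ hNR]
      nlinarith
    set M : ℝ := Real.exp (-(ε * (|ξ| - B))^2) with hM
    have hae : ∀ᵐ x ∂(volume.restrict Ω),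
        ‖Real.exp (-(ε * (x - ξ))^2)‖ ≤ M := by
      filter_upwards [ae_restrict_mem hΩmeas] with x hx
      have hxB : |x| ≤ B := abs_le.2 ⟨(hΩ hx).1, (hΩ hx).2⟩
      rw [Real.norm_eq_abs, abs_of_pos (Real.exp_pos _)]
      apply Real.exp_le_exp.2
      have h1 : |ξ| - B ≤ |x - ξ| := by
        have h2 := abs_sub_abs_le_abs_sub ξ x
        rw [abs_sub_comm] at h2
        linarith
      have h2 : (|ξ| - B)^2 ≤ |x - ξ|^2 :=
        pow_le_pow_left₀ (by linarith) h1 2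
      have h3 : (ε * (|ξ| - B))^2 ≤ (ε * (x - ξ))^2 := by
        rw [mul_pow, mul_pow, ← sq_abs (x - ξ)]
        nlinarith [sq_nonneg ε]
      linarith
    have hle := eLpNorm_le_of_ae_bound (p := 2) (μ := volume.restrict Ω) hae
    have hμ : (volume.restrict Ω) Set.univ ≤ ENNReal.ofReal (2*B) := by
      rw [Measure.restrict_apply_univ]
      refine le_trans (measure_mono hΩ) ?_
      rw [Real.volume_Icc]
      exact le_of_eq (by congr 1; ring)
    have hM0 : 0 < M := Real.exp_pos _
    have hle2 : eLpNorm (fun x => Real.exp (-(ε * (x - ξ))^2)) 2 (volume.restrict Ω)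
        ≤ ENNReal.ofReal (Real.sqrt (2*B) * M) := by
      refine hle.trans ?_
      have h2inv : ((2:ENNReal).toReal)⁻¹ = (2:ℝ)⁻¹ := by norm_num
      calc (volume.restrict Ω) Set.univ ^ ((2:ENNReal).toReal)⁻¹ * ENNReal.ofReal M
          ≤ (ENNReal.ofReal (2*B)) ^ ((2:ENNReal).toReal)⁻¹ * ENNReal.ofReal M := by
            gcongr
        _ = ENNReal.ofReal (Real.sqrt (2*B) * M) := by
            rw [h2inv, ENNReal.ofReal_rpow_of_pos (by positivity),
              ← ENNReal.ofReal_mul (by positivity)]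
            congr 2
            rw [Real.sqrt_eq_rpow]
            norm_num
    have hto : (eLpNorm (fun x => Real.exp (-(ε * (x - ξ))^2)) 2 (volume.restrict Ω)).toReal
        ≤ Real.sqrt (2*B) * M :=
      ENNReal.toReal_le_of_le_ofReal (by positivity) hle2
    have h3 : Real.sqrt ε *
        (eLpNorm (fun x => Real.exp (-(ε * (x - ξ))^2)) 2 (volume.restrict Ω)).toReal
        ≤ Real.sqrt ε * (Real.sqrt (2*B) * M) :=
      mul_le_mul_of_nonneg_left hto (Real.sqrt_nonneg _)
    have h4 := pow_le_pow_left₀ (mul_nonneg (Real.sqrt_nonneg _) ENNReal.toReal_nonneg) h3 2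
    refine h4.trans (le_of_eq ?_)
    have hM2 : M ^ 2 = Real.exp (-(2*ε^2) * (|ξ| - B)^2) := by
      rw [hM, sq, ← Real.exp_add]
      congr 1
      ring
    have hcond : (N:ℤ) < |(n:ℤ)| := n.2
    have habsξ : |ξ| = |((n:ℤ):ℝ)| * T / N := by
      rw [hξ, abs_div, abs_mul, abs_of_pos hT, abs_of_pos hNR]
    simp only [hgdef]
    rw [if_pos hcond, hq]
    simp only
    rw [mul_pow, mul_pow, Real.sq_sqrt hε.le, Real.sq_sqrt (by positivity : (0:ℝ) ≤ 2*B), hM2,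
      habsξ]
    ring
  set E : ℝ := erfc (Real.sqrt 2 * ε * d) with hE
  have hC : ∑' m : ℤ, g m ≤ Real.sqrt (2*π) * B * N / T * E := by
    rw [htg]
    have h2 := aux_integral ε d hε
    have hs2 : Real.sqrt 2 * Real.sqrt 2 = 2 := Real.mul_self_sqrt (by norm_num)
    have h2pos : (0:ℝ) < Real.sqrt 2 := Real.sqrt_pos.2 (by norm_num)
    have hinv : (Real.sqrt 2 * ε)⁻¹ = Real.sqrt 2 / (2 * ε) := by
      rw [eq_div_iff (by positivity), inv_mul_eq_iff_eq_mul₀ (by positivity)]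
      nlinarith
    calc 4*B*ε * ∑' k : ℕ, q (d + (k+1)*hstep)
        ≤ 4*B*ε * (hstep⁻¹ * ((Real.sqrt 2 * ε)⁻¹ * (Real.sqrt π / 2 * E))) := by
          refine mul_le_mul_of_nonneg_left ?_ (by positivity)
          refine hcle.trans (le_of_eq ?_)
          rw [h2, hE]
      _ = Real.sqrt (2*π) * B * N / T * E := by
          rw [hinv, hhs, Real.sqrt_mul (by norm_num : (0:ℝ) ≤ 2)]
          field_simp
          ring
  have hlam2 : Summable (fun m : ℤ => ‖lam m‖^2) := by
    have h := ((lp.memℓp lam).summable (by norm_num : 0 < (2:ENNReal).toReal))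
    refine h.congr (fun m => ?_)
    norm_num [Real.rpow_natCast]
  have hnormsq : ‖lam‖^2 = ∑' m : ℤ, ‖lam m‖^2 := by
    have h := lp.norm_rpow_eq_tsum (p := 2) (by norm_num) lam
    norm_num [Real.rpow_natCast] at h
    exact h
  have hF2 : Summable (fun n : {n : ℤ // (N : ℤ) < |n|} => ‖lam (n:ℤ)‖^2) :=
    hlam2.comp_injective Subtype.val_injective
  have hG2sum : Summable (fun n : {n : ℤ // (N : ℤ) < |n|} =>
      (Real.sqrt ε * (eLpNorm (fun x => Real.exp (-(ε * (x - (n : ℤ) * T / N))^2)) 2 (volume.restrict Ω)).toReal)^2) :=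
    Summable.of_nonneg_of_le (fun n => sq_nonneg _) hb
      (hgsummable.comp_injective Subtype.val_injective)
  have hGle : ∑' n : {n : ℤ // (N : ℤ) < |n|},
      (Real.sqrt ε * (eLpNorm (fun x => Real.exp (-(ε * (x - (n : ℤ) * T / N))^2)) 2 (volume.restrict Ω)).toReal)^2 ≤ ∑' m : ℤ, g m :=
    hG2sum.tsum_le_tsum_of_inj Subtype.val Subtype.val_injective (fun c _ => hg0 c) hb hgsummable
  have hFle : ∑' n : {n : ℤ // (N : ℤ) < |n|}, ‖lam (n:ℤ)‖^2 ≤ ‖lam‖^2 := by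
    rw [hnormsq]
    exact hF2.tsum_le_tsum_of_inj Subtype.val Subtype.val_injective (fun c _ => sq_nonneg _)
      (fun i => le_rfl) hlam2
  calc (∑' n : {n : ℤ // (N : ℤ) < |n|}, ‖lam (n:ℤ)‖ * Real.sqrt ε * (eLpNorm (fun x => Real.exp (-(ε * (x - (n : ℤ) * T / N))^2)) 2 (volume.restrict Ω)).toReal)
      = ∑' n : {n : ℤ // (N : ℤ) < |n|}, ‖lam (n:ℤ)‖ * (Real.sqrt ε * (eLpNorm (fun x => Real.exp (-(ε * (x - (n : ℤ) * T / N))^2)) 2 (volume.restrict Ω)).toReal) :=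
        tsum_congr (fun n => mul_assoc _ _ _)
    _ ≤ Real.sqrt (∑' n : {n : ℤ // (N : ℤ) < |n|}, ‖lam (n:ℤ)‖^2) *
          Real.sqrt (∑' n : {n : ℤ // (N : ℤ) < |n|}, (Real.sqrt ε * (eLpNorm (fun x => Real.exp (-(ε * (x - (n : ℤ) * T / N))^2)) 2 (volume.restrict Ω)).toReal)^2) :=
        tsum_CS _ _ (fun n => norm_nonneg _)
          (fun n => mul_nonneg (Real.sqrt_nonneg _) ENNReal.toReal_nonneg) hF2 hG2sum
    _ ≤ ‖lam‖ * Real.sqrt (Real.sqrt (2*π) * B * N / T * E) := by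
        refine mul_le_mul ?_ ?_ (Real.sqrt_nonneg _) (norm_nonneg _)
        · calc Real.sqrt (∑' n : {n : ℤ // (N : ℤ) < |n|}, ‖lam (n:ℤ)‖^2)
              ≤ Real.sqrt (‖lam‖^2) := Real.sqrt_le_sqrt hFle
            _ = ‖lam‖ := Real.sqrt_sq (norm_nonneg _)
        · exact Real.sqrt_le_sqrt (hGle.trans hC)
    _ = Real.sqrt (Real.sqrt (2*π) * B * N / T * E) * ‖lam‖ := mul_comm _ _
end
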